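/- If two clock periods τ_i and τ_j each satisfy the bounded jitter condition 1 - δ ≤ τ/τ_ref ≤ 1 + δ with 0 < δ < 1 and τ_ref > 0, and π = (1 - δ)/(2δ), then π/(π + 1) ≤ min(τ_i, τ_j)/max(τ_i, τ_j). -/

import Mathlib

/-- Bounded clock jitter implies bounded clock drift:
if `1 - δ ≤ τ/τref ≤ 1 + δ` for both clocks and `π = (1-δ)/(2δ)`,
then `π/(π+1) ≤ min(τ_i,τ_j)/max(τ_i,τ_j)`. -/
theorem bounded_clock_drift
    (δ τref τi τj : ℝ)
    (hδ0 : 0 < δ) (hδ1 : δ < 1) (href : 0 < τref)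
    (hi1 : 1 - δ ≤ τi / τref) (hi2 : τi / τref ≤ 1 + δ)
    (hj1 : 1 - δ ≤ τj / τref) (hj2 : τj / τref ≤ 1 + δ)
    (π : ℝ) (hπ : π = (1 - δ) / (2 * δ)) :
    π / (π + 1) ≤ min τi τj / max τi τj := by
  have h1δ : 0 < 1 - δ := by linarith
  have h2δ : (0:ℝ) < 2 * δ := by linarith
  have hkey : π / (π + 1) = (1 - δ) / (1 + δ) := by
    rw [hπ]
    have h1δ' : (0:ℝ) < 1 + δ := by linarith
    field_simp
    linarith
  rw [hkey]
  have hi1' : (1 - δ) * τref ≤ τi := by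
    rw [div_le_iff₀ href] at *; linarith [(le_div_iff₀ href).mp hi1]
  have hj1' : (1 - δ) * τref ≤ τj := by
    linarith [(le_div_iff₀ href).mp hj1]
  have hi2' : τi ≤ (1 + δ) * τref := (div_le_iff₀ href).mp hi2
  have hj2' : τj ≤ (1 + δ) * τref := (div_le_iff₀ href).mp hj2
  have hmin : (1 - δ) * τref ≤ min τi τj := le_min hi1' hj1'
  have hmax : max τi τj ≤ (1 + δ) * τref := max_le hi2' hj2'
  have hminpos : 0 < min τi τj := lt_of_lt_of_le (by positivity) hmin
  have hmaxpos : 0 < max τi τj := lt_of_lt_of_le hminpos (min_le_max)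
  calc (1 - δ) / (1 + δ) = ((1 - δ) * τref) / ((1 + δ) * τref) := by
        rw [mul_div_mul_right _ _ (ne_of_gt href)]
    _ ≤ min τi τj / max τi τj :=
        div_le_div₀ (le_of_lt hminpos) hmin hmaxpos hmax
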